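/- Let (μ̂, λ̂, x̂) be an approximate 2D-eigentriplet of Hermitian matrices (A, C) with μ̂, λ̂ ∈ ℝ, ‖x̂‖ = 1, and define γ_A = x̂ᴴAx̂ − λ̂, γ_C = x̂ᴴCx̂, r = (A − μ̂C − λ̂I)x̂, and η₁ = max{|γ_A|/‖A‖, |γ_C|/‖C‖, ‖r‖/(‖A‖ + |μ̂|‖C‖)}. If δA, δC are Hermitian perturbations such that (μ̂, λ̂, x̂) is an exact 2D-eigentriplet of (A + δA, C + δC), then max{‖δA‖/‖A‖, ‖δC‖/‖C‖} ≥ η₁. -/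

import Mathlib

open scoped Matrix

/-- Spectral (ℓ²-operator) norm of a square complex matrix. -/
noncomputable def specNorm {n : Type*} [Fintype n] [DecidableEq n]
    (M : Matrix n n ℂ) : ℝ :=
  ‖Matrix.toEuclideanCLM (𝕜 := ℂ) M‖

/-- Euclidean norm of a complex vector. -/
noncomputable def vecNorm {n : Type*} [Fintype n] (x : n → ℂ) : ℝ :=
  ‖(EuclideanSpace.equiv n ℂ).symm x‖

set_option linter.unusedSectionVars false
section helpers
variable {n : Type*} [Fintype n] [DecidableEq n]

lemma vecNorm_eq (x : n → ℂ) :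
    vecNorm x = ‖(WithLp.equiv 2 (n → ℂ)).symm x‖ := rfl

lemma quad_eq (M : Matrix n n ℂ) (x : n → ℂ) :
    star x ⬝ᵥ M.mulVec x =
      inner ℂ ((WithLp.equiv 2 (n → ℂ)).symm x)
        (Matrix.toEuclideanCLM (𝕜 := ℂ) M ((WithLp.equiv 2 (n → ℂ)).symm x)) := by
  rw [WithLp.equiv_symm_apply, Matrix.toEuclideanCLM_toLp, EuclideanSpace.inner_toLp_toLp,
    dotProduct_comm]

lemma specNorm_nonneg (M : Matrix n n ℂ) : 0 ≤ specNorm M := norm_nonneg _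

lemma specNorm_pos {M : Matrix n n ℂ} (h : M ≠ 0) : 0 < specNorm M := by
  rw [specNorm, norm_pos_iff]
  simpa using h

lemma vecNorm_one {x : n → ℂ} (hx : star x ⬝ᵥ x = 1) : vecNorm x = 1 := by
  have h := quad_eq (1 : Matrix n n ℂ) x
  rw [Matrix.one_mulVec, hx] at h
  simp only [map_one, ContinuousLinearMap.one_apply] at h
  rw [inner_self_eq_norm_sq_to_K] at h
  have h2 : ((‖(WithLp.equiv 2 (n → ℂ)).symm x‖ : ℂ))^2 = 1 := h.symm
  have h3 : (vecNorm x)^2 = 1 := by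
    rw [vecNorm_eq]
    exact_mod_cast h2
  nlinarith [vecNorm_eq x ▸ (norm_nonneg ((WithLp.equiv 2 (n → ℂ)).symm x))]

lemma quad_bound (M : Matrix n n ℂ) {x : n → ℂ} (hx : star x ⬝ᵥ x = 1) :
    ‖star x ⬝ᵥ M.mulVec x‖ ≤ specNorm M := by
  rw [quad_eq]
  calc ‖inner ℂ ((WithLp.equiv 2 (n → ℂ)).symm x)
        (Matrix.toEuclideanCLM (𝕜 := ℂ) M ((WithLp.equiv 2 (n → ℂ)).symm x))‖
      ≤ ‖(WithLp.equiv 2 (n → ℂ)).symm x‖ *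
        ‖Matrix.toEuclideanCLM (𝕜 := ℂ) M ((WithLp.equiv 2 (n → ℂ)).symm x)‖ :=
        norm_inner_le_norm _ _
    _ ≤ ‖(WithLp.equiv 2 (n → ℂ)).symm x‖ *
        (‖Matrix.toEuclideanCLM (𝕜 := ℂ) M‖ * ‖(WithLp.equiv 2 (n → ℂ)).symm x‖) := by
        gcongr; exact ContinuousLinearMap.le_opNorm _ _
    _ = specNorm M := by
        rw [specNorm, ← vecNorm_eq, vecNorm_one hx]; ring

lemma mulVec_bound (M : Matrix n n ℂ) (x : n → ℂ) :
    vecNorm (M.mulVec x) ≤ specNorm M * vecNorm x := by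
  have : (WithLp.equiv 2 (n → ℂ)).symm (M.mulVec x) =
      Matrix.toEuclideanCLM (𝕜 := ℂ) M ((WithLp.equiv 2 (n → ℂ)).symm x) := by
    rw [WithLp.equiv_symm_apply, Matrix.toEuclideanCLM_toLp]
  rw [vecNorm_eq, this, vecNorm_eq]
  exact ContinuousLinearMap.le_opNorm _ _

lemma vecNorm_smul (c : ℂ) (x : n → ℂ) :
    vecNorm (c • x) = ‖c‖ * vecNorm x := by
  rw [vecNorm_eq, vecNorm_eq]
  exact norm_smul c _

lemma vecNorm_sub_le (x y : n → ℂ) : vecNorm (x - y) ≤ vecNorm x + vecNorm y := by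
  rw [vecNorm_eq, vecNorm_eq, vecNorm_eq]
  exact norm_sub_le _ _

lemma vecNorm_neg (x : n → ℂ) : vecNorm (-x) = vecNorm x := by
  rw [vecNorm_eq, vecNorm_eq]
  exact norm_neg _

end helpers

/-- A Hermitian matrix is indefinite: its quadratic form takes both
positive and negative values. -/
def IsIndefinite {n : Type*} [Fintype n] (M : Matrix n n ℂ) : Prop :=
  (∃ y : n → ℂ, 0 < (star y ⬝ᵥ M.mulVec y).re) ∧
  (∃ z : n → ℂ, (star z ⬝ᵥ M.mulVec z).re < 0)

/-- `(μ, lam, x)` is a 2D-eigentriplet of the pair `(A, C)`: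
`(A - μ C) x = lam x`, `xᴴ C x = 0`, `xᴴ x = 1`. -/
def Is2DEigentriplet {n : Type*} [Fintype n] (A C : Matrix n n ℂ)
    (μ lam : ℝ) (x : n → ℂ) : Prop :=
  (A - (μ : ℂ) • C).mulVec x = (lam : ℂ) • x ∧
  star x ⬝ᵥ C.mulVec x = 0 ∧ star x ⬝ᵥ x = 1

/-- lower bound on the backward error. If `(μ̂, λ̂, x̂)` is an
exact 2D-eigentriplet of the Hermitian-perturbed pair `(A + δA, C + δC)`,
then `max{‖δA‖/‖A‖, ‖δC‖/‖C‖} ≥ η₁`. -/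
theorem stmt1 {n : Type*} [Fintype n] [DecidableEq n]
    (A C δA δC : Matrix n n ℂ)
    (hA : A.IsHermitian) (hC : C.IsHermitian)
    (hδA : δA.IsHermitian) (hδC : δC.IsHermitian)
    (hA0 : A ≠ 0) (hC0 : C ≠ 0)
    (μ lam : ℝ) (x : n → ℂ) (hx : star x ⬝ᵥ x = 1)
    (ht : Is2DEigentriplet (A + δA) (C + δC) μ lam x) :
    max (max
        (‖star x ⬝ᵥ A.mulVec x - (lam : ℂ)‖ / specNorm A)
        (‖star x ⬝ᵥ C.mulVec x‖ / specNorm C))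
      (vecNorm ((A - (μ : ℂ) • C - (lam : ℂ) • 1).mulVec x) /
        (specNorm A + |μ| * specNorm C))
      ≤ max (specNorm δA / specNorm A) (specNorm δC / specNorm C) := by
  obtain ⟨h1, h2, -⟩ := ht
  set qA := star x ⬝ᵥ A.mulVec x with hqA
  set qC := star x ⬝ᵥ C.mulVec x with hqC
  set qδA := star x ⬝ᵥ δA.mulVec x with hqδA
  set qδC := star x ⬝ᵥ δC.mulVec x with hqδC
  have e2 : qC + qδC = 0 := by
    simpa [Matrix.add_mulVec, dotProduct_add] using h2
  have e1 : qA + qδA - (μ : ℂ) * (qC + qδC) = (lam : ℂ) := by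
    have := congrArg (fun v => star x ⬝ᵥ v) h1
    simpa [Matrix.sub_mulVec, Matrix.add_mulVec, Matrix.smul_mulVec,
      dotProduct_sub, dotProduct_add, dotProduct_smul, smul_eq_mul, hx,
      mul_add] using this
  have eqA : qA - (lam : ℂ) = -qδA := by linear_combination e1 + (μ : ℂ) * e2
  have eqC : qC = -qδC := by linear_combination e2
  have hr : (A - (μ : ℂ) • C - (lam : ℂ) • 1).mulVec x =
      -((δA - (μ : ℂ) • δC).mulVec x) := by
    have hm : A - (μ : ℂ) • C - (lam : ℂ) • 1 =
        (A + δA - (μ : ℂ) • (C + δC)) - (lam : ℂ) • 1 + (-(δA - (μ : ℂ) • δC)) := by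
      module
    rw [hm, Matrix.add_mulVec, Matrix.sub_mulVec, h1, Matrix.neg_mulVec]
    simp [Matrix.smul_mulVec, Matrix.one_mulVec]
  have hApos := specNorm_pos hA0
  have hCpos := specNorm_pos hC0
  set M := max (specNorm δA / specNorm A) (specNorm δC / specNorm C) with hM
  have hδAle : specNorm δA ≤ M * specNorm A :=
    (div_le_iff₀ hApos).mp (le_max_left _ _)
  have hδCle : specNorm δC ≤ M * specNorm C :=
    (div_le_iff₀ hCpos).mp (le_max_right _ _)
  have hx1 : vecNorm x = 1 := vecNorm_one hx
  refine max_le (max_le ?_ ?_) ?_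
  · rw [div_le_iff₀ hApos]
    calc ‖qA - (lam : ℂ)‖ = ‖qδA‖ := by rw [eqA, norm_neg]
      _ ≤ specNorm δA := quad_bound δA hx
      _ ≤ M * specNorm A := hδAle
  · rw [div_le_iff₀ hCpos]
    calc ‖qC‖ = ‖qδC‖ := by rw [eqC, norm_neg]
      _ ≤ specNorm δC := quad_bound δC hx
      _ ≤ M * specNorm C := hδCle
  · have hden : 0 < specNorm A + |μ| * specNorm C := by positivity
    rw [div_le_iff₀ hden]
    have hb : vecNorm ((A - (μ : ℂ) • C - (lam : ℂ) • 1).mulVec x) ≤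
        specNorm δA + |μ| * specNorm δC := by
      rw [hr, vecNorm_neg]
      have hsplit : (δA - (μ : ℂ) • δC).mulVec x =
          δA.mulVec x - (μ : ℂ) • δC.mulVec x := by
        rw [Matrix.sub_mulVec, Matrix.smul_mulVec]
      rw [hsplit]
      calc vecNorm (δA.mulVec x - (μ : ℂ) • δC.mulVec x)
          ≤ vecNorm (δA.mulVec x) + vecNorm ((μ : ℂ) • δC.mulVec x) :=
            vecNorm_sub_le _ _
        _ = vecNorm (δA.mulVec x) + |μ| * vecNorm (δC.mulVec x) := by
            rw [vecNorm_smul, Complex.norm_real, Real.norm_eq_abs]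
        _ ≤ specNorm δA * vecNorm x + |μ| * (specNorm δC * vecNorm x) := by
            gcongr <;> [exact mulVec_bound _ _; exact mulVec_bound _ _]
        _ = specNorm δA + |μ| * specNorm δC := by rw [hx1]; ring
    calc vecNorm ((A - (μ : ℂ) • C - (lam : ℂ) • 1).mulVec x)
        ≤ specNorm δA + |μ| * specNorm δC := hb
      _ ≤ M * specNorm A + |μ| * (M * specNorm C) := by
          gcongr
      _ = M * (specNorm A + |μ| * specNorm C) := by ring
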